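/- arXiv:2401.03923 — 5 statements merged into one kernel-verified Lean document; each statement's English description precedes it below -/
import Mathlib

section
/- Let $Z$ be a real random variable with $\mathbb{E}[Z]=0$ satisfying the Bernstein-type moment condition $\mathbb{E}[|Z|^k]\le (Bk\log n)^k(V+n^{-2})$ for all integers $k\ge 2$, where $B>0$, $V\ge 0$, and $n\ge 2$. Then for every $\lambda$ with $0<\lambda<\tfrac{1}{2eB\log n}$, $\mathbb{E}[\exp(\lambda Z)]\le \exp\big(\tfrac{e^2\lambda^2}{2}(B\log n)^2(V+n^{-2})\big)$. -/
open MeasureTheory Real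

private lemma powA (k : ℕ) (hk : 1 ≤ k) :
    ((k : ℝ)) ^ k * Real.exp 1 ≤ (Nat.factorial k : ℝ) * Real.exp 1 ^ k := by
  induction k, hk using Nat.le_induction with
  | base => simp
  | succ n hn ih =>
    have hn0 : (0:ℝ) < n := by exact_mod_cast hn
    have h2 : (1 + 1/(n:ℝ))^n ≤ Real.exp 1 := by
      have h := Real.add_one_le_exp (1/(n:ℝ))
      calc (1 + 1/(n:ℝ))^n ≤ Real.exp (1/(n:ℝ)) ^ n := by
            apply pow_le_pow_left₀ (by positivity) (by linarith)
        _ = Real.exp ((n:ℝ) * (1/(n:ℝ))) := by rw [Real.exp_nat_mul]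
        _ = Real.exp 1 := by rw [mul_one_div, div_self hn0.ne']
    have h1 : ((n:ℝ)+1)^n ≤ (n:ℝ)^n * Real.exp 1 := by
      have h3 : ((n:ℝ)+1)^n = (n:ℝ)^n * (1 + 1/(n:ℝ))^n := by
        rw [← mul_pow]; congr 1; field_simp
      rw [h3]
      exact mul_le_mul_of_nonneg_left h2 (by positivity)
    have he : (0:ℝ) < Real.exp 1 := Real.exp_pos 1
    push_cast [Nat.factorial_succ]
    calc ((n:ℝ)+1)^(n+1) * Real.exp 1 = (((n:ℝ)+1)^n * ((n:ℝ)+1)) * Real.exp 1 := by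
          rw [pow_succ]
      _ ≤ (((n:ℝ)^n * Real.exp 1) * ((n:ℝ)+1)) * Real.exp 1 := by
          have := mul_le_mul_of_nonneg_right h1 (by positivity : (0:ℝ) ≤ (n:ℝ)+1)
          exact mul_le_mul_of_nonneg_right this he.le
      _ = (((n:ℝ)^n * Real.exp 1) * ((n:ℝ)+1)) * Real.exp 1 := by ring
      _ ≤ (((Nat.factorial n : ℝ) * Real.exp 1 ^ n) * ((n:ℝ)+1)) * Real.exp 1 := by
          have := mul_le_mul_of_nonneg_right ih (by positivity : (0:ℝ) ≤ (n:ℝ)+1)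
          exact mul_le_mul_of_nonneg_right this he.le
      _ = ((n:ℝ)+1) * (Nat.factorial n : ℝ) * Real.exp 1 ^ (n+1) := by
          rw [pow_succ]; ring

private lemma numB : 2 + 9/(4*Real.exp 1) + 8/(3*Real.exp 1^2) + 625/(192*Real.exp 1^3)
    + Real.exp 1/8 ≤ Real.exp 1^2/2 := by
  have hga := Real.exp_one_gt_d9
  have hlb := Real.exp_one_lt_d9
  have ha : (2.7182818 : ℝ) ≤ Real.exp 1 := by norm_num at hga ⊢; linarith
  have hb : Real.exp 1 ≤ (2.7182819 : ℝ) := by norm_num at hlb ⊢; linarith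
  have he : (0:ℝ) < Real.exp 1 := Real.exp_pos 1
  have h1 : 9/(4*Real.exp 1) ≤ 9/(4*(2.7182818:ℝ)) := by gcongr <;> norm_num
  have h2 : 8/(3*Real.exp 1^2) ≤ 8/(3*(2.7182818:ℝ)^2) := by gcongr <;> norm_num
  have h3 : 625/(192*Real.exp 1^3) ≤ 625/(192*(2.7182818:ℝ)^3) := by gcongr <;> norm_num
  have h4 : Real.exp 1/8 ≤ (2.7182819:ℝ)/8 := by linarith
  have h5 : (2.7182818:ℝ)^2/2 ≤ Real.exp 1^2/2 := by gcongr <;> norm_num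
  have key : 2 + 9/(4*(2.7182818:ℝ)) + 8/(3*(2.7182818:ℝ)^2) + 625/(192*(2.7182818:ℝ)^3)
      + (2.7182819:ℝ)/8 ≤ (2.7182818:ℝ)^2/2 := by norm_num
  linarith

private lemma expC (y : ℝ) : Real.exp y - y ≤ Real.exp |y| - |y| := by
  rcases le_or_gt 0 y with h | h
  · rw [abs_of_nonneg h]
  · rw [abs_of_neg h]
    have hs : -y < Real.sinh (-y) := Real.self_lt_sinh_iff.2 (by linarith)
    rw [Real.sinh_eq] at hs
    simp only [neg_neg] at hs
    linarith

private lemma exp_tail (y : ℝ) :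
    (Summable fun k : ℕ => y^(k+2) / (Nat.factorial (k+2) : ℝ)) ∧
    ∑' k : ℕ, y^(k+2) / (Nat.factorial (k+2) : ℝ) = Real.exp y - 1 - y := by
  have hs : Summable (fun k : ℕ => y^k / (Nat.factorial k : ℝ)) :=
    Real.summable_pow_div_factorial y
  have h2 : Summable fun k : ℕ => y^(k+2)/(Nat.factorial (k+2):ℝ) :=
    (summable_nat_add_iff 2).2 hs
  refine ⟨h2, ?_⟩
  have hexp : Real.exp y = ∑' k : ℕ, y^k / (Nat.factorial k : ℝ) := by
    rw [Real.exp_eq_exp_ℝ, NormedSpace.exp_eq_tsum_div]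
  have hsplit := Summable.sum_add_tsum_nat_add (f := fun k : ℕ => y^k/(Nat.factorial k : ℝ)) 2 hs
  have hr : ∑ i ∈ Finset.range 2, y^i/(Nat.factorial i:ℝ) = 1 + y := by
    simp [Finset.sum_range_succ, Nat.factorial]
  rw [hr, ← hexp] at hsplit
  linarith

private lemma seriesB {x : ℝ} (hx : 0 < x) (hex : 2 * (Real.exp 1 * x) ≤ 1) :
    Summable (fun j : ℕ => (((j:ℝ)+2)*x)^(j+2) / (Nat.factorial (j+2) : ℝ)) ∧
    ∑' j : ℕ, (((j:ℝ)+2)*x)^(j+2) / (Nat.factorial (j+2) : ℝ) ≤ Real.exp 1 ^ 2 * x^2 / 2 := by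
  have he0 : (0:ℝ) < Real.exp 1 := Real.exp_pos 1
  have hex1 : Real.exp 1 * x ≤ 1/2 := by linarith
  have hxle : x ≤ 1/(2*Real.exp 1) := by rw [le_div_iff₀ (by positivity)]; linarith
  set u : ℕ → ℝ := fun j => (((j:ℝ)+2)*x)^(j+2) / (Nat.factorial (j+2) : ℝ) with hu
  have hunn : ∀ j, 0 ≤ u j := fun j => by
    apply div_nonneg _ (by positivity)
    positivity
  have hub : ∀ j, u j ≤ (Real.exp 1 * x^2) * (Real.exp 1 * x)^j := by
    intro j
    have hA := powA (j+2) (by omega)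
    push_cast at hA
    have hf0 : (0:ℝ) < (Nat.factorial (j+2) : ℝ) := by exact_mod_cast (j+2).factorial_pos
    have hA' : ((j:ℝ)+2)^(j+2) ≤ (Nat.factorial (j+2) : ℝ) * Real.exp 1 ^ (j+1) := by
      rw [pow_succ (Real.exp 1) (j+1)] at hA
      nlinarith
    have hmp : (Real.exp 1 * x)^j = Real.exp 1 ^ j * x ^ j := mul_pow _ _ _
    rw [hu]
    rw [div_le_iff₀ hf0]
    calc (((j:ℝ)+2)*x)^(j+2) = ((j:ℝ)+2)^(j+2) * x^(j+2) := mul_pow _ _ _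
      _ ≤ ((Nat.factorial (j+2):ℝ) * Real.exp 1 ^(j+1)) * x^(j+2) := by
          exact mul_le_mul_of_nonneg_right hA' (by positivity)
      _ = (Real.exp 1 * x^2) * (Real.exp 1 * x)^j * (Nat.factorial (j+2):ℝ) := by
          rw [hmp, pow_succ (Real.exp 1) j, pow_add x j 2]; ring
  have hgeo : Summable (fun j : ℕ => (Real.exp 1 * x^2) * (Real.exp 1 * x)^j) :=
    (summable_geometric_of_lt_one (by positivity) (by linarith)).mul_left _
  have hu_sum : Summable u := Summable.of_nonneg_of_le hunn hub hgeo
  refine ⟨hu_sum, ?_⟩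
  have hsplit := Summable.sum_add_tsum_nat_add (f := u) 4 hu_sum
  rw [← hsplit]
  have hsum4 : ∑ i ∈ Finset.range 4, u i = u 0 + u 1 + u 2 + u 3 := by
    simp [Finset.sum_range_succ]
  have h0 : u 0 = 2 * x^2 := by
    simp only [hu]; norm_num [Nat.factorial]; ring
  have h1 : u 1 ≤ 9/(4*Real.exp 1) * x^2 := by
    have e1 : u 1 = (9/2) * x^2 * x := by
      simp only [hu]; norm_num [Nat.factorial]; ring
    rw [e1]
    calc (9/2) * x^2 * x ≤ (9/2) * x^2 * (1/(2*Real.exp 1)) := by gcongr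
      _ = 9/(4*Real.exp 1) * x^2 := by
          generalize hEE : Real.exp 1 = E at he0 ⊢
          field_simp
          ring
  have h2 : u 2 ≤ 8/(3*Real.exp 1^2) * x^2 := by
    have e1 : u 2 = (32/3) * x^2 * x^2 := by
      simp only [hu]; norm_num [Nat.factorial]; ring
    rw [e1]
    calc (32/3) * x^2 * x^2 ≤ (32/3) * x^2 * (1/(2*Real.exp 1))^2 := by
          gcongr
      _ = 8/(3*Real.exp 1^2) * x^2 := by
          generalize hEE : Real.exp 1 = E at he0 ⊢
          field_simp
          ring
  have h3 : u 3 ≤ 625/(192*Real.exp 1^3) * x^2 := by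
    have e1 : u 3 = (625/24) * x^2 * x^3 := by
      simp only [hu]; norm_num [Nat.factorial]; ring
    rw [e1]
    calc (625/24) * x^2 * x^3 ≤ (625/24) * x^2 * (1/(2*Real.exp 1))^3 := by
          gcongr
      _ = 625/(192*Real.exp 1^3) * x^2 := by
          generalize hEE : Real.exp 1 = E at he0 ⊢
          field_simp
          ring
  have htail : ∑' j, u (j+4) ≤ Real.exp 1/8 * x^2 := by
    have hb : ∀ j:ℕ, u (j+4) ≤ ((Real.exp 1 * x^2)*(Real.exp 1 * x)^4) * (Real.exp 1 * x)^j := by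
      intro j
      calc u (j+4) ≤ (Real.exp 1 * x^2) * (Real.exp 1 * x)^(j+4) := hub (j+4)
        _ = ((Real.exp 1 * x^2)*(Real.exp 1 * x)^4) * (Real.exp 1 * x)^j := by
            rw [pow_add]; ring
    have hsum' : Summable fun j => u (j+4) := (summable_nat_add_iff 4).2 hu_sum
    have hg2 : Summable fun j:ℕ => ((Real.exp 1 * x^2)*(Real.exp 1*x)^4) * (Real.exp 1 * x)^j :=
      (summable_geometric_of_lt_one (by positivity) (by linarith)).mul_left _
    calc ∑' j, u (j+4) ≤ ∑' j, ((Real.exp 1 * x^2)*(Real.exp 1*x)^4) * (Real.exp 1*x)^j :=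
          Summable.tsum_le_tsum hb hsum' hg2
      _ = ((Real.exp 1 * x^2)*(Real.exp 1*x)^4) * (1 - Real.exp 1 * x)⁻¹ := by
          rw [tsum_mul_left, tsum_geometric_of_lt_one (by positivity) (by linarith)]
      _ ≤ ((Real.exp 1 * x^2)*(1/2:ℝ)^4) * 2 := by
          have h14 : (Real.exp 1 * x)^4 ≤ (1/2:ℝ)^4 :=
            pow_le_pow_left₀ (by positivity) (by linarith) 4
          have hinv : (1 - Real.exp 1 * x)⁻¹ ≤ 2 := by
            rw [show (2:ℝ) = (2⁻¹)⁻¹ by norm_num]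
            apply inv_anti₀ (by norm_num)
            linarith
          have hnn : (0:ℝ) ≤ Real.exp 1 * x^2 := by positivity
          calc ((Real.exp 1 * x^2)*(Real.exp 1*x)^4) * (1 - Real.exp 1*x)⁻¹
              ≤ ((Real.exp 1 * x^2)*(1/2:ℝ)^4) * (1 - Real.exp 1*x)⁻¹ := by
                apply mul_le_mul_of_nonneg_right _ (inv_nonneg.2 (by linarith))
                exact mul_le_mul_of_nonneg_left h14 hnn
            _ ≤ ((Real.exp 1 * x^2)*(1/2:ℝ)^4) * 2 := by
                apply mul_le_mul_of_nonneg_left hinv (by positivity)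
      _ = Real.exp 1/8 * x^2 := by ring
  have hnum := numB
  calc (∑ i ∈ Finset.range 4, u i) + ∑' j, u (j+4)
      ≤ (2*x^2 + 9/(4*Real.exp 1)*x^2 + 8/(3*Real.exp 1^2)*x^2 + 625/(192*Real.exp 1^3)*x^2)
        + Real.exp 1/8*x^2 := by rw [hsum4]; linarith
    _ = (2 + 9/(4*Real.exp 1) + 8/(3*Real.exp 1^2) + 625/(192*Real.exp 1^3) + Real.exp 1/8) * x^2 := by
        ring
    _ ≤ (Real.exp 1^2/2) * x^2 := mul_le_mul_of_nonneg_right hnum (by positivity)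
    _ = Real.exp 1^2 * x^2 / 2 := by ring

/-- From a Bernstein-type moment condition, a bound on the moment generating function. -/
theorem stmt1 (Ω : Type) [MeasurableSpace Ω] (P : Measure Ω) [IsProbabilityMeasure P]
    (Z : Ω → ℝ) (B V : ℝ) (n : ℕ) (hB : 0 < B) (hV : 0 ≤ V) (hn : 2 ≤ n)
    (hmean : ∫ ω, Z ω ∂P = 0)
    (hmom : ∀ k : ℕ, 2 ≤ k →
      Integrable (fun ω => |Z ω| ^ k) P ∧
        ∫ ω, |Z ω| ^ k ∂P ≤ (B * k * Real.log n) ^ k * (V + ((n : ℝ) ^ 2)⁻¹)) :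
    ∀ l : ℝ, 0 < l → l < 1 / (2 * Real.exp 1 * B * Real.log n) →
      ∫ ω, Real.exp (l * Z ω) ∂P ≤
        Real.exp (Real.exp 1 ^ 2 * l ^ 2 / 2 * (B * Real.log n) ^ 2 * (V + ((n : ℝ) ^ 2)⁻¹)) := by
  intro l hl hlB
  have he0 : (0:ℝ) < Real.exp 1 := Real.exp_pos 1
  have hn1 : (1:ℝ) < (n:ℝ) := by
    have : (2:ℝ) ≤ (n:ℝ) := by exact_mod_cast hn
    linarith
  have hlog : 0 < Real.log n := Real.log_pos hn1
  set M : ℝ := V + ((n:ℝ)^2)⁻¹ with hM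
  have hM0 : 0 ≤ M := add_nonneg hV (by positivity)
  set x : ℝ := l * (B * Real.log n) with hx
  have hx0 : 0 < x := mul_pos hl (mul_pos hB hlog)
  have hDpos : (0:ℝ) < 2 * Real.exp 1 * B * Real.log n := by positivity
  have hex : 2 * (Real.exp 1 * x) ≤ 1 := by
    rw [lt_div_iff₀ hDpos] at hlB
    calc 2 * (Real.exp 1 * x) = l * (2 * Real.exp 1 * B * Real.log n) := by rw [hx]; ring
      _ ≤ 1 := hlB.le
  by_cases hI : Integrable (fun ω => Real.exp (l * Z ω)) P
  swap
  · rw [integral_undef hI]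
    exact (Real.exp_pos _).le
  -- measurability and integrability of Z
  have hZae : AEMeasurable Z P := by
    have h1 : AEMeasurable (fun ω => Real.exp (l * Z ω)) P := hI.aemeasurable
    have h2 : AEMeasurable (fun ω => Real.log (Real.exp (l * Z ω))) P :=
      Real.measurable_log.comp_aemeasurable h1
    simp only [Real.log_exp] at h2
    have h3 := h2.const_mul l⁻¹
    have h4 : (fun ω => l⁻¹ * (l * Z ω)) = Z := by funext ω; field_simp
    rwa [h4] at h3
  have hZint : Integrable Z P := by
    refine Integrable.mono' ((hmom 2 le_rfl).1.add (integrable_const 1))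
      hZae.aestronglyMeasurable ?_
    filter_upwards with ω
    rw [Real.norm_eq_abs]
    simp only [Pi.add_apply]
    nlinarith [sq_nonneg (|Z ω| - 1), abs_nonneg (Z ω)]
  -- the summands
  set g : ℕ → Ω → ℝ := fun k ω => (l * |Z ω|)^k / (Nat.factorial k : ℝ) with hg
  have hgnn : ∀ k ω, 0 ≤ g k ω := fun k ω => by
    apply div_nonneg _ (by positivity)
    positivity
  have hgint : ∀ k, Integrable (g k) P := by
    intro k
    match k with
    | 0 => simpa [hg] using integrable_const (1:ℝ)
    | 1 =>
      simp only [hg, pow_one, Nat.factorial_one, Nat.cast_one, div_one]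
      exact hZint.abs.const_mul l
    | (m+2) =>
      have h := (hmom (m+2) (by omega)).1
      have h5 : (fun ω => (l*|Z ω|)^(m+2)/(Nat.factorial (m+2):ℝ))
           = fun ω => (l^(m+2)/(Nat.factorial (m+2):ℝ)) * |Z ω|^(m+2) := by
        funext ω; rw [mul_pow]; ring
      simp only [hg]
      rw [h5]
      exact h.const_mul _
  set c : ℕ → ℝ := fun k => ∫ ω, g (k+2) ω ∂P with hc
  have hgi : ∀ k : ℕ, c k ≤ M * ((((k:ℝ)+2)*x)^(k+2) / (Nat.factorial (k+2):ℝ)) := by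
    intro k
    have h := (hmom (k+2) (by omega)).2
    have heq : c k = (l^(k+2)/(Nat.factorial (k+2):ℝ)) * ∫ ω, |Z ω|^(k+2) ∂P := by
      rw [hc]
      simp only [hg]
      rw [← integral_const_mul]
      congr 1; funext ω; rw [mul_pow]; ring
    rw [heq]
    have hlf : (0:ℝ) ≤ l^(k+2)/(Nat.factorial (k+2):ℝ) := by positivity
    have hstep := mul_le_mul_of_nonneg_left h hlf
    refine hstep.trans (le_of_eq ?_)
    have hbase : l^(k+2) * (B*((k:ℕ)+2:ℝ)*Real.log n)^(k+2) = ((((k:ℝ)+2))*x)^(k+2) := by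
      rw [← mul_pow, hx]; push_cast; ring
    push_cast at hbase ⊢
    rw [← hbase]
    ring
  have hcnn : ∀ k, 0 ≤ c k := fun k => integral_nonneg (hgnn _)
  obtain ⟨hSB, hTB⟩ := seriesB hx0 hex
  have hMu : Summable (fun k : ℕ => M * ((((k:ℝ)+2)*x)^(k+2) / (Nat.factorial (k+2):ℝ))) :=
    hSB.mul_left M
  have hcs : Summable c := Summable.of_nonneg_of_le hcnn hgi hMu
  have hcb : ∑' k, c k ≤ M * (Real.exp 1^2 * x^2/2) := by
    calc ∑' k, c k ≤ ∑' k : ℕ, M * ((((k:ℝ)+2)*x)^(k+2) / (Nat.factorial (k+2):ℝ)) :=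
        Summable.tsum_le_tsum hgi hcs hMu
      _ = M * ∑' k : ℕ, (((k:ℝ)+2)*x)^(k+2) / (Nat.factorial (k+2):ℝ) := tsum_mul_left
      _ ≤ M * (Real.exp 1^2 * x^2/2) := mul_le_mul_of_nonneg_left hTB hM0
  -- pointwise bound
  have hphi_nn : ∀ ω, 0 ≤ Real.exp (l * Z ω) - l * Z ω := fun ω => by
    nlinarith [Real.add_one_le_exp (l * Z ω)]
  have hphi_int : Integrable (fun ω => Real.exp (l*Z ω) - l * Z ω) P :=
    hI.sub (hZint.const_mul l)
  have hint_eq : ∫ ω, Real.exp (l*Z ω) ∂P = ∫ ω, (Real.exp (l*Z ω) - l*Z ω) ∂P := by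
    rw [integral_sub hI (hZint.const_mul l), integral_const_mul, hmean, mul_zero, sub_zero]
  have hpt : ∀ ω, ENNReal.ofReal (Real.exp (l*Z ω) - l*Z ω)
      ≤ 1 + ∑' k : ℕ, ENNReal.ofReal (g (k+2) ω) := by
    intro ω
    have hy0 : 0 ≤ l * |Z ω| := by positivity
    obtain ⟨hs2, hteq⟩ := exp_tail (l * |Z ω|)
    have h1 : Real.exp (l*Z ω) - l*Z ω ≤ 1 + (Real.exp (l*|Z ω|) - 1 - l*|Z ω|) := by
      have hEC := expC (l * Z ω)
      have habs : |l * Z ω| = l * |Z ω| := by rw [abs_mul, abs_of_pos hl]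
      rw [habs] at hEC; linarith
    have h2 : ENNReal.ofReal (1 + (Real.exp (l*|Z ω|) - 1 - l*|Z ω|)) =
        1 + ∑' k : ℕ, ENNReal.ofReal (g (k+2) ω) := by
      rw [← hteq, ENNReal.ofReal_add zero_le_one (tsum_nonneg fun k => by positivity),
        ENNReal.ofReal_one,
        ENNReal.ofReal_tsum_of_nonneg (fun k => by positivity) hs2]
    exact le_of_le_of_eq (ENNReal.ofReal_le_ofReal h1) h2
  have hmeas_g : ∀ k:ℕ, AEMeasurable (fun ω => ENNReal.ofReal (g (k+2) ω)) P :=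
    fun k => ((hgint (k+2)).aemeasurable).ennreal_ofReal
  have hlin : ∫⁻ ω, ENNReal.ofReal (Real.exp (l*Z ω) - l*Z ω) ∂P
      ≤ ENNReal.ofReal (1 + M * (Real.exp 1^2*x^2/2)) := by
    calc ∫⁻ ω, ENNReal.ofReal (Real.exp (l*Z ω) - l*Z ω) ∂P
        ≤ ∫⁻ ω, (1 + ∑' k : ℕ, ENNReal.ofReal (g (k+2) ω)) ∂P := lintegral_mono hpt
      _ = ∫⁻ _, (1:ENNReal) ∂P + ∫⁻ ω, ∑' k : ℕ, ENNReal.ofReal (g (k+2) ω) ∂P :=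
        lintegral_add_left measurable_const _
      _ = 1 + ∑' k : ℕ, ∫⁻ ω, ENNReal.ofReal (g (k+2) ω) ∂P := by
        rw [lintegral_const, measure_univ, mul_one, lintegral_tsum hmeas_g]
      _ = 1 + ∑' k : ℕ, ENNReal.ofReal (c k) := by
        congr 1
        exact tsum_congr fun k =>
          (ofReal_integral_eq_lintegral_ofReal (hgint (k+2)) (ae_of_all _ (hgnn (k+2)))).symm
      _ = 1 + ENNReal.ofReal (∑' k, c k) := by
        rw [ENNReal.ofReal_tsum_of_nonneg hcnn hcs]
      _ ≤ 1 + ENNReal.ofReal (M * (Real.exp 1^2*x^2/2)) :=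
        add_le_add_right (ENNReal.ofReal_le_ofReal hcb) 1
      _ = ENNReal.ofReal (1 + M * (Real.exp 1^2*x^2/2)) := by
        rw [ENNReal.ofReal_add zero_le_one (mul_nonneg hM0 (by positivity)), ENNReal.ofReal_one]
  have hfin : ∫ ω, (Real.exp (l*Z ω) - l*Z ω) ∂P ≤ 1 + M * (Real.exp 1^2*x^2/2) := by
    rw [integral_eq_lintegral_of_nonneg_ae (ae_of_all _ hphi_nn) hphi_int.1]
    have h6 := ENNReal.toReal_mono ENNReal.ofReal_ne_top hlin
    rwa [ENNReal.toReal_ofReal (by positivity)] at h6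
  rw [hint_eq]
  refine hfin.trans ?_
  have h7 := Real.add_one_le_exp (M * (Real.exp 1^2*x^2/2))
  calc 1 + M * (Real.exp 1^2*x^2/2) ≤ Real.exp (M * (Real.exp 1^2*x^2/2)) := by linarith
    _ = Real.exp (Real.exp 1 ^ 2 * l ^ 2 / 2 * (B * Real.log n) ^ 2 * M) := by
        rw [hx]; ring_nf
end

section
/- For every real $x$ with $0 < x \le \tfrac{1}{2e}$, one has $\sum_{k=2}^{\infty} \frac{(kx)^k}{k!} \le \frac{e^2 x^2}{2}$. -/
open Finset

lemma polyaux (a t M : ℝ) (ha : 0 < a) (ht : 0 < t) (hM : 0 ≤ M) :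
    4 * (t * (M+5)^2 / ((M+5) * ((M+4) * a)))
      ≤ t / a
      + t * (M+5) / ((M+4) * a)
      + t * (M+5)^2 / ((M+5) * ((M+4) * a))
      + t * (M+5)^3 / ((M+6) * ((M+5) * ((M+4) * a)))
      + t * (M+5)^4 / ((M+7) * ((M+6) * ((M+5) * ((M+4) * a)))) := by
  have h4 : (0:ℝ) < M + 4 := by linarith
  have h5 : (0:ℝ) < M + 5 := by linarith
  have h6 : (0:ℝ) < M + 6 := by linarith
  have h7 : (0:ℝ) < M + 7 := by linarith
  rw [div_add_div _ _ (by positivity) (by positivity), div_add_div _ _ (by positivity) (by positivity),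
    div_add_div _ _ (by positivity) (by positivity), div_add_div _ _ (by positivity) (by positivity),
    mul_div_assoc', div_le_div_iff₀ (by positivity) (by positivity)]
  have hta : (0:ℝ) ≤ t * a ^ 5 := by positivity
  ring_nf
  nlinarith [mul_nonneg hta (pow_nonneg hM 1), mul_nonneg hta (pow_nonneg hM 2),
    mul_nonneg hta (pow_nonneg hM 3), mul_nonneg hta (pow_nonneg hM 4),
    mul_nonneg hta (pow_nonneg hM 5), mul_nonneg hta (pow_nonneg hM 6),
    mul_nonneg hta (pow_nonneg hM 7), mul_nonneg hta (pow_nonneg hM 8),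
    mul_nonneg hta (pow_nonneg hM 9), mul_nonneg hta (pow_nonneg hM 10),
    mul_nonneg hta (pow_nonneg hM 11), mul_nonneg hta (pow_nonneg hM 12)]

lemma aux1 (m : ℕ) :
    4 * (((m : ℝ) + 5) ^ (m + 5) / ((m + 5).factorial : ℝ)) ≤ Real.exp ((m : ℝ) + 5) := by
  have h := Real.sum_le_exp_of_nonneg (x := (m : ℝ) + 5) (by positivity) (m + 8)
  refine le_trans ?_ h
  rw [show m + 8 = (m+3) + 5 by ring]
  rw [Finset.sum_range_succ, Finset.sum_range_succ, Finset.sum_range_succ,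
    Finset.sum_range_succ, Finset.sum_range_succ]
  have h0 : (0:ℝ) ≤ ∑ i ∈ range (m + 3), ((m : ℝ) + 5) ^ i / (i.factorial : ℝ) := by
    positivity
  have e4 : ((m+4).factorial : ℝ) = ((m:ℝ)+4) * ((m+3).factorial : ℝ) := by
    rw [show m+4 = (m+3)+1 from rfl, Nat.factorial_succ]; push_cast; ring
  have e5 : ((m+5).factorial : ℝ) = ((m:ℝ)+5) * ((m+4).factorial : ℝ) := by
    rw [show m+5 = (m+4)+1 from rfl, Nat.factorial_succ]; push_cast; ring
  have e6 : ((m+6).factorial : ℝ) = ((m:ℝ)+6) * ((m+5).factorial : ℝ) := by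
    rw [show m+6 = (m+5)+1 from rfl, Nat.factorial_succ]; push_cast; ring
  have e7 : ((m+7).factorial : ℝ) = ((m:ℝ)+7) * ((m+6).factorial : ℝ) := by
    rw [show m+7 = (m+6)+1 from rfl, Nat.factorial_succ]; push_cast; ring
  have p4 : ((m : ℝ)+5) ^ (m+4) = ((m : ℝ)+5) ^ (m+3) * ((m:ℝ)+5) := by
    rw [show m+4 = (m+3)+1 from rfl, pow_succ]
  have p5 : ((m : ℝ)+5) ^ (m+5) = ((m : ℝ)+5) ^ (m+3) * ((m:ℝ)+5)^2 := by
    rw [show m+5 = (m+3)+2 from rfl, pow_add]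
  have p6 : ((m : ℝ)+5) ^ (m+6) = ((m : ℝ)+5) ^ (m+3) * ((m:ℝ)+5)^3 := by
    rw [show m+6 = (m+3)+3 from rfl, pow_add]
  have p7 : ((m : ℝ)+5) ^ (m+7) = ((m : ℝ)+5) ^ (m+3) * ((m:ℝ)+5)^4 := by
    rw [show m+7 = (m+3)+4 from rfl, pow_add]
  rw [e7, e6, e5, e4, p4, p5, p6, p7]
  have key := polyaux ((m+3).factorial : ℝ) (((m : ℝ)+5) ^ (m+3)) (m : ℝ)
    (by positivity) (by positivity) (by positivity)
  linarith [key]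

-- termwise bound for the tail: for k ≥ 5
lemma aux2 (x : ℝ) (hx : 0 < x) (m : ℕ) :
    (((m + 5 : ℕ) : ℝ) * x) ^ (m + 5) / ((m + 5).factorial : ℝ)
      ≤ (Real.exp 1 * x) ^ (m + 5) / 4 := by
  have h1 := aux1 m
  have hexp : Real.exp ((m : ℝ) + 5) = Real.exp 1 ^ (m + 5) := by
    rw [← Real.exp_nat_mul]; norm_num
  rw [hexp] at h1
  have hxp : (0:ℝ) < x ^ (m + 5) := by positivity
  have : ((m : ℝ) + 5) ^ (m + 5) / ((m + 5).factorial : ℝ) ≤ Real.exp 1 ^ (m + 5) / 4 := by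
    linarith
  calc (((m + 5 : ℕ) : ℝ) * x) ^ (m + 5) / ((m + 5).factorial : ℝ)
      = ((m : ℝ) + 5) ^ (m + 5) / ((m + 5).factorial : ℝ) * x ^ (m + 5) := by
        push_cast; rw [mul_pow]; ring
    _ ≤ Real.exp 1 ^ (m + 5) / 4 * x ^ (m + 5) := by
        exact mul_le_mul_of_nonneg_right this hxp.le
    _ = (Real.exp 1 * x) ^ (m + 5) / 4 := by rw [mul_pow]; ring

-- crude bound for summability : (k x)^k / k! ≤ (e x)^k
lemma aux3 (x : ℝ) (hx : 0 ≤ x) (k : ℕ) :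
    (((k : ℕ) : ℝ) * x) ^ k / (k.factorial : ℝ) ≤ (Real.exp 1 * x) ^ k := by
  have h : ((k : ℝ)) ^ k / (k.factorial : ℝ) ≤ Real.exp 1 ^ k := by
    have h2 := Real.sum_le_exp_of_nonneg (x := (k : ℝ)) (by positivity) (k + 1)
    rw [Finset.sum_range_succ] at h2
    have h0 : (0:ℝ) ≤ ∑ i ∈ range k, (k : ℝ) ^ i / (i.factorial : ℝ) := by positivity
    have hexp : Real.exp (k : ℝ) = Real.exp 1 ^ k := by
      rw [← Real.exp_nat_mul]; norm_num
    linarith [hexp ▸ h2]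
  calc ((k : ℝ) * x) ^ k / (k.factorial : ℝ)
      = (k : ℝ) ^ k / (k.factorial : ℝ) * x ^ k := by rw [mul_pow]; ring
    _ ≤ Real.exp 1 ^ k * x ^ k :=
        mul_le_mul_of_nonneg_right h (by positivity)
    _ = (Real.exp 1 * x) ^ k := (mul_pow _ _ _).symm

/-- For `0 < x ≤ 1/(2e)`, the series `∑_{k ≥ 2} (k x)^k / k!` is at most `e² x² / 2`. -/
theorem stmt2 (x : ℝ) (hx : 0 < x) (hx' : x ≤ 1 / (2 * Real.exp 1)) :
    ∑' k : ℕ, (((k + 2 : ℕ) : ℝ) * x) ^ (k + 2) / ((k + 2).factorial : ℝ)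
      ≤ Real.exp 1 ^ 2 * x ^ 2 / 2 := by
  have he : (0:ℝ) < Real.exp 1 := Real.exp_pos 1
  set y : ℝ := Real.exp 1 * x with hy
  have hy0 : 0 < y := by positivity
  have hy2 : y ≤ 1 / 2 := by
    rw [hy]
    rw [le_div_iff₀ (by positivity)] at hx'
    linarith
  have hy1 : y < 1 := by linarith
  set f : ℕ → ℝ := fun k => (((k + 2 : ℕ) : ℝ) * x) ^ (k + 2) / ((k + 2).factorial : ℝ) with hf
  have hf_nonneg : ∀ k, 0 ≤ f k := fun k => by positivity
  have hf_le : ∀ k, f k ≤ y ^ (k + 2) := fun k => aux3 x hx.le (k + 2)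
  have hsumy : Summable (fun k : ℕ => y ^ (k + 2)) := by
    apply Summable.comp_injective (summable_geometric_of_lt_one hy0.le hy1)
    exact fun a b h => by omega
  have hsum : Summable f :=
    Summable.of_nonneg_of_le hf_nonneg hf_le hsumy
  have hsplit := Summable.sum_add_tsum_nat_add 3 hsum
  rw [← hsplit]
  -- tail bound
  have htail_le : ∀ k : ℕ, f (k + 3) ≤ y ^ 5 / 4 * y ^ k := by
    intro k
    have := aux2 x hx k
    have hrw : f (k + 3) = (((k + 5 : ℕ) : ℝ) * x) ^ (k + 5) / ((k + 5).factorial : ℝ) := rfl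
    rw [hrw]
    calc (((k + 5 : ℕ) : ℝ) * x) ^ (k + 5) / ((k + 5).factorial : ℝ)
        ≤ y ^ (k + 5) / 4 := this
      _ = y ^ 5 / 4 * y ^ k := by rw [show k + 5 = 5 + k by ring, pow_add]; ring
  have hsumtail : Summable (fun k : ℕ => f (k + 3)) := hsum.comp_injective (fun a b h => by omega)
  have htail : ∑' k : ℕ, f (k + 3) ≤ y ^ 5 / 4 * (1 - y)⁻¹ := by
    calc ∑' k : ℕ, f (k + 3) ≤ ∑' k : ℕ, y ^ 5 / 4 * y ^ k := by
          apply Summable.tsum_le_tsum htail_le hsumtail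
          exact (summable_geometric_of_lt_one hy0.le hy1).mul_left _
      _ = y ^ 5 / 4 * (1 - y)⁻¹ := by
          rw [tsum_mul_left, tsum_geometric_of_lt_one hy0.le hy1]
  have hinv : (1 - y)⁻¹ ≤ 2 := by
    rw [inv_le_comm₀ (by linarith) (by norm_num)]
    linarith
  have htail2 : ∑' k : ℕ, f (k + 3) ≤ y ^ 5 / 2 := by
    have : y ^ 5 / 4 * (1 - y)⁻¹ ≤ y ^ 5 / 4 * 2 :=
      mul_le_mul_of_nonneg_left hinv (by positivity)
    calc ∑' k : ℕ, f (k + 3) ≤ y ^ 5 / 4 * (1 - y)⁻¹ := htail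
      _ ≤ y ^ 5 / 4 * 2 := this
      _ = y ^ 5 / 2 := by ring
  -- first three terms
  have hf0 : f 0 = 2 * x ^ 2 := by simp [hf]; norm_num [Nat.factorial]; ring
  have hf1 : f 1 = 9 / 2 * x ^ 3 := by simp [hf]; norm_num [Nat.factorial]; ring
  have hf2 : f 2 = 32 / 3 * x ^ 4 := by simp [hf]; norm_num [Nat.factorial]; ring
  have hsum3 : ∑ i ∈ Finset.range 3, f i = 2 * x ^ 2 + 9 / 2 * x ^ 3 + 32 / 3 * x ^ 4 := by
    rw [Finset.sum_range_succ, Finset.sum_range_succ, Finset.sum_range_one, hf0, hf1, hf2]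
  rw [hsum3]
  -- final numeric estimate
  have hegt : (2.7182818283 : ℝ) < Real.exp 1 := Real.exp_one_gt_d9
  have hex : Real.exp 1 * x ≤ 1 / 2 := hy2
  have hy3 : y ^ 3 ≤ (1/2 : ℝ) ^ 3 := pow_le_pow_left₀ hy0.le hy2 3
  have h5 : y ^ 5 ≤ y ^ 2 / 8 := by
    calc y ^ 5 = y ^ 2 * y ^ 3 := by ring
      _ ≤ y ^ 2 * (1/8) := by nlinarith [sq_nonneg y]
      _ = y ^ 2 / 8 := by ring
  have hy2' : y ^ 2 = Real.exp 1 ^ 2 * x ^ 2 := by rw [hy]; ring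
  have hy5 : y ^ 5 / 2 ≤ Real.exp 1 ^ 2 * x ^ 2 / 16 := by rw [← hy2']; linarith
  have he271 : (2.71 : ℝ) < Real.exp 1 := by linarith
  have hxb : x ≤ 0.184 := by
    have h := mul_lt_mul_of_pos_right hegt hx
    linarith
  have h3 : (7.3441 : ℝ) * x ^ 2 ≤ Real.exp 1 ^ 2 * x ^ 2 := by
    have he2 : (7.3441 : ℝ) ≤ Real.exp 1 ^ 2 := by
      have h1 := mul_lt_mul_of_pos_right he271 (lt_trans (by norm_num) he271)
      calc (7.3441 : ℝ) = 2.71 * 2.71 := by norm_num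
        _ ≤ Real.exp 1 ^ 2 := by rw [sq]; nlinarith [he271]
    exact mul_le_mul_of_nonneg_right he2 (sq_nonneg x)
  have hc3 : x ^ 3 ≤ 0.184 * x ^ 2 := by
    have := mul_le_mul_of_nonneg_right hxb (sq_nonneg x)
    calc x ^ 3 = x * x ^ 2 := by ring
      _ ≤ 0.184 * x ^ 2 := this
  have hx2 : x ^ 2 ≤ 0.033856 := by
    have h := mul_le_mul hxb hxb hx.le (by norm_num)
    calc x ^ 2 = x * x := sq x
      _ ≤ 0.184 * 0.184 := h
      _ = 0.033856 := by norm_num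
  have hc4 : x ^ 4 ≤ 0.033856 * x ^ 2 := by
    have := mul_le_mul_of_nonneg_right hx2 (sq_nonneg x)
    calc x ^ 4 = x ^ 2 * x ^ 2 := by ring
      _ ≤ 0.033856 * x ^ 2 := this
  linarith [htail2, hy5, h3, hc3, hc4, sq_nonneg x]
end

section
/- Fix $\lambda>0$ and let $\psi(z;\lambda)=\min\{\max\{z,-\lambda\},\lambda\}$. For every fixed real $u$, the map $b\mapsto b^2\,\psi\big(\tfrac{u}{1+b};\lambda\big)^2$ is nondecreasing on $(0,\infty)$. -/
/-- The clipping function `ψ(z; lam) = min (max z (-lam)) lam`. -/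
def clip (lam z : ℝ) : ℝ := min (max z (-lam)) lam

lemma clip_abs (lam : ℝ) (hl : 0 ≤ lam) (z : ℝ) : |clip lam z| = min |z| lam := by
  rcases le_total 0 z with h | h
  · have h1 : max z (-lam) = z := max_eq_left (by linarith)
    have h2 : 0 ≤ min z lam := le_min h hl
    rw [clip, h1, abs_of_nonneg h2, abs_of_nonneg h]
  · have h1 : min (max z (-lam)) lam = max z (-lam) :=
      min_eq_left (le_trans (max_le (by linarith) (by linarith)) hl)
    have h2 : max z (-lam) ≤ 0 := max_le h (by linarith)
    rw [clip, h1, abs_of_nonpos h2, abs_of_nonpos h]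
    rcases le_total z (-lam) with h3 | h3
    · rw [max_eq_right h3, min_eq_right (by linarith), neg_neg]
    · rw [max_eq_left h3, min_eq_left (by linarith)]

/-- For fixed `u`, the map `b ↦ b² ψ(u/(1+b); λ)²` is nondecreasing on `(0, ∞)`. -/
theorem stmt9 (lam u : ℝ) (hlam : 0 < lam) :
    MonotoneOn (fun b : ℝ => b ^ 2 * (clip lam (u / (1 + b))) ^ 2) (Set.Ioi (0 : ℝ)) := by
  have key : ∀ c : ℝ, 0 < c →
      c ^ 2 * (clip lam (u / (1 + c))) ^ 2 = (min (|u| * (c / (1 + c))) (lam * c)) ^ 2 := by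
    intro c hc
    have hc1 : (0 : ℝ) < 1 + c := by linarith
    have h1 : c ^ 2 * (clip lam (u / (1 + c))) ^ 2 = (c * |clip lam (u / (1 + c))|) ^ 2 := by
      rw [mul_pow, sq_abs]
    rw [h1, clip_abs lam hlam.le, abs_div, abs_of_pos hc1,
      mul_min_of_nonneg _ _ hc.le]
    congr 1
    · congr 1
      · field_simp
      · ring
  intro a ha b hb hab
  simp only [Set.mem_Ioi] at ha hb
  simp only
  rw [key a ha, key b hb]
  have h1a : (0 : ℝ) < 1 + a := by linarith
  have h1b : (0 : ℝ) < 1 + b := by linarith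
  have hfrac : a / (1 + a) ≤ b / (1 + b) := by
    rw [div_le_div_iff₀ h1a h1b]; nlinarith
  have hmin : min (|u| * (a / (1 + a))) (lam * a) ≤ min (|u| * (b / (1 + b))) (lam * b) :=
    min_le_min (mul_le_mul_of_nonneg_left hfrac (abs_nonneg u))
      (mul_le_mul_of_nonneg_left hab hlam.le)
  have hnn : 0 ≤ min (|u| * (a / (1 + a))) (lam * a) :=
    le_min (mul_nonneg (abs_nonneg u) (div_nonneg ha.le h1a.le))
      (mul_nonneg hlam.le ha.le)
  exact pow_le_pow_left₀ hnn hmin 2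
end

section
/- Let $G\sim\mathcal{N}(0,1)$ and $\omega\ge 0$. Then for every real $\theta$, $\mathbb{E}\big[(\omega - G\,\mathrm{sign}(\theta+G))\,\mathbf{1}(|\theta+G|>\omega)\big] \ge \tfrac{1}{\sqrt{2\pi}} e^{-\omega^2/2}\Big[\omega^2\Big(1-\big(\tfrac{\theta^2}{2}+1\big)e^{-\theta^2/2}\Big) - 2\Big]$. -/
open MeasureTheory ProbabilityTheory Real Set Filter
open scoped ENNReal NNReal

noncomputable def s11phi (x : ℝ) : ℝ := (Real.sqrt (2*Real.pi))⁻¹ * Real.exp (-x^2/2)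

lemma s11phi_nonneg (x : ℝ) : 0 ≤ s11phi x := by
  unfold s11phi; positivity

lemma s11phi_even (x : ℝ) : s11phi (-x) = s11phi x := by
  unfold s11phi; rw [neg_pow]; norm_num

lemma s11phi_eq : gaussianPDFReal 0 1 = s11phi := by
  funext x
  simp [gaussianPDFReal, s11phi]

lemma s11continuous_phi : Continuous s11phi := by
  unfold s11phi; fun_prop

lemma s11hasDerivAt_phi (x : ℝ) : HasDerivAt s11phi (-x * s11phi x) x := by
  have h1 : HasDerivAt (fun t : ℝ => -t^2/2) (-x) x := by
    have := ((hasDerivAt_pow 2 x).neg).div_const 2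
    simpa using this.congr_deriv (by ring)
  have h2 := (h1.exp).const_mul ((Real.sqrt (2*Real.pi))⁻¹)
  have h3 : -x * s11phi x = (Real.sqrt (2*Real.pi))⁻¹ * (Real.exp (-x^2/2) * -x) := by
    unfold s11phi; ring
  rw [h3]; exact h2

lemma s11integrable_phi : Integrable s11phi := by
  have h := (integrable_exp_neg_mul_sq (by norm_num : (0:ℝ) < 1/2)).const_mul
    ((Real.sqrt (2*Real.pi))⁻¹)
  refine h.congr (Filter.Eventually.of_forall fun x => ?_)
  unfold s11phi; ring_nf

lemma s11integrable_xphi : Integrable (fun x => x * s11phi x) := by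
  have h := (integrable_mul_exp_neg_mul_sq (by norm_num : (0:ℝ) < 1/2)).const_mul
    ((Real.sqrt (2*Real.pi))⁻¹)
  refine h.congr (Filter.Eventually.of_forall fun x => ?_)
  unfold s11phi; ring_nf

lemma s11tendsto_phi_atTop : Tendsto s11phi atTop (nhds 0) := by
  have h1 : Tendsto (fun x : ℝ => -x^2/2) atTop atBot := by
    apply Filter.Tendsto.atBot_div_const (by norm_num : (0:ℝ) < 2)
    exact tendsto_neg_atTop_atBot.comp (tendsto_pow_atTop (two_ne_zero))
  have h2 := (Real.tendsto_exp_atBot.comp h1).const_mul ((Real.sqrt (2*Real.pi))⁻¹)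
  rw [mul_zero] at h2
  exact h2

lemma s11tendsto_phi_atBot : Tendsto s11phi atBot (nhds 0) := by
  have := s11tendsto_phi_atTop.comp tendsto_neg_atBot_atTop
  refine this.congr fun x => ?_
  simp [Function.comp, s11phi_even]

lemma s11momIoi (a : ℝ) : ∫ x in Ioi a, x * s11phi x = s11phi a := by
  have h := integral_Ioi_of_hasDerivAt_of_tendsto' (a := a) (m := 0)
    (f := fun x => -s11phi x) (f' := fun x => x * s11phi x)
    (fun x _ => by exact (s11hasDerivAt_phi x).neg.congr_deriv (by ring))
    (s11integrable_xphi.integrableOn)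
    (by simpa using s11tendsto_phi_atTop.neg)
  simpa using h

noncomputable def s11G (a : ℝ) : ℝ := ∫ x in Ioi a, s11phi x

lemma s11G_nonneg (a : ℝ) : 0 ≤ s11G a :=
  setIntegral_nonneg measurableSet_Ioi fun x _ => s11phi_nonneg x

lemma s11HIic (b : ℝ) : ∫ x in Iic b, s11phi x = s11G (-b) := by
  have h := integral_comp_neg_Ioi (-b) s11phi
  rw [neg_neg] at h
  rw [s11G, ← h]
  simp_rw [s11phi_even]

lemma s11momIic (b : ℝ) : ∫ x in Iic b, x * s11phi x = -s11phi b := by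
  have h : ∫ x in Ioi (-b), (fun x => -x * s11phi (-x)) x = ∫ x in Iic b, x * s11phi x := by
    have := integral_comp_neg_Ioi (-b) (fun x => x * s11phi x)
    simpa using this
  rw [← h]
  have : ∀ x, -x * s11phi (-x) = -(x * s11phi x) := fun x => by rw [s11phi_even]; ring
  simp_rw [this]
  rw [integral_neg, s11momIoi, s11phi_even]

lemma s11hasDerivAt_G (a : ℝ) : HasDerivAt s11G (-(s11phi a)) a := by
  have hIc : ∀ u : ℝ, s11G u = (∫ x, s11phi x) - ∫ x in Iic u, s11phi x := by
    intro u
    have := integral_add_compl (measurableSet_Iic (a := u)) s11integrable_phi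
    rw [compl_Iic] at this
    rw [s11G, ← this]; ring
  have hD : HasDerivAt (fun u => ∫ x in Iic u, s11phi x) (s11phi a) a := by
    have heq : ∀ u : ℝ, ∫ x in Iic u, s11phi x
        = (∫ x in Iic a, s11phi x) + ∫ x in a..u, s11phi x := by
      intro u
      rw [← intervalIntegral.integral_Iic_sub_Iic s11integrable_phi.integrableOn
        s11integrable_phi.integrableOn]
      ring
    have hd : HasDerivAt (fun u => ∫ x in a..u, s11phi x) (s11phi a) a :=
      intervalIntegral.integral_hasDerivAt_right
        s11integrable_phi.intervalIntegrable
        s11continuous_phi.stronglyMeasurable.stronglyMeasurableAtFilter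
        s11continuous_phi.continuousAt
    have := (hd.const_add (∫ x in Iic a, s11phi x))
    exact HasDerivAt.congr_of_eventuallyEq this
      (Filter.Eventually.of_forall fun u => by simpa using heq u)
  have := (hD.const_sub (∫ x, s11phi x))
  refine HasDerivAt.congr_of_eventuallyEq ?_
    (Filter.Eventually.of_forall fun u => by simpa using hIc u)
  simpa using this

lemma s11exp_ge_sq {s : ℝ} (hs : 0 ≤ s) : s^2 ≤ Real.exp s := by
  have h1 : (1 + s/4)^4 ≤ Real.exp s := by
    have h2 : (1 + s/4) ≤ Real.exp (s/4) := by
      have := Real.add_one_le_exp (s/4); linarith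
    have h3 : (0:ℝ) ≤ 1 + s/4 := by linarith
    calc (1 + s/4)^4 ≤ (Real.exp (s/4))^4 := by
          exact pow_le_pow_left₀ h3 h2 4
      _ = Real.exp s := by
          rw [← Real.exp_nat_mul]; congr 1; push_cast; ring
  nlinarith [sq_nonneg (1 - s/4), sq_nonneg s, sq_nonneg (s/4)]

lemma s11phi_shift (ω t : ℝ) : s11phi (ω - t) = s11phi ω * Real.exp (-t^2/2) * Real.exp (ω*t) := by
  unfold s11phi
  rw [mul_assoc, mul_assoc, ← Real.exp_add, ← Real.exp_add]
  ring_nf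

lemma s11key (ω θ : ℝ) (hω : 0 ≤ ω) (hθ : 0 ≤ θ) :
    s11phi ω * (ω ^ 2 * (1 - (θ ^ 2 / 2 + 1) * Real.exp (-θ ^ 2 / 2)) - 2)
      ≤ ω * s11G (ω - θ) - s11phi (ω - θ) + (ω * s11G (ω + θ) - s11phi (ω + θ)) := by
  set F : ℝ → ℝ := fun t =>
    ω * s11G (ω - t) - s11phi (ω - t) + (ω * s11G (ω + t) - s11phi (ω + t))
      - s11phi ω * (ω ^ 2 * (1 - (t ^ 2 / 2 + 1) * Real.exp (-t ^ 2 / 2)) - 2) with hF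
  have hFderiv : ∀ t : ℝ, HasDerivAt F
      (t * (s11phi (ω - t) + s11phi (ω + t))
        - s11phi ω * (ω ^ 2 * (t ^ 3 / 2) * Real.exp (-t ^ 2 / 2))) t := by
    intro t
    have hsub : HasDerivAt (fun t : ℝ => ω - t) (-1) t := by
      simpa using (hasDerivAt_id t).const_sub ω
    have hadd : HasDerivAt (fun t : ℝ => ω + t) 1 t := by
      simpa using (hasDerivAt_id t).const_add ω
    have hG1 : HasDerivAt (fun t : ℝ => s11G (ω - t)) (s11phi (ω - t)) t := by
      have := (s11hasDerivAt_G (ω - t)).comp t hsub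
      exact this.congr_deriv (by ring)
    have hG2 : HasDerivAt (fun t : ℝ => s11G (ω + t)) (-(s11phi (ω + t))) t := by
      have := (s11hasDerivAt_G (ω + t)).comp t hadd
      exact this.congr_deriv (by ring)
    have hp1 : HasDerivAt (fun t : ℝ => s11phi (ω - t)) ((ω - t) * s11phi (ω - t)) t := by
      have := (s11hasDerivAt_phi (ω - t)).comp t hsub
      exact this.congr_deriv (by ring)
    have hp2 : HasDerivAt (fun t : ℝ => s11phi (ω + t)) (-(ω + t) * s11phi (ω + t)) t := by
      have := (s11hasDerivAt_phi (ω + t)).comp t hadd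
      exact this.congr_deriv (by ring)
    have hexp : HasDerivAt (fun t : ℝ => Real.exp (-t ^ 2 / 2)) (-t * Real.exp (-t^2/2)) t := by
      have h1 : HasDerivAt (fun t : ℝ => -t^2/2) (-t) t := by
        have := ((hasDerivAt_pow 2 t).neg).div_const 2
        simpa using this.congr_deriv (by ring)
      simpa using h1.exp.congr_deriv (by ring)
    have hq : HasDerivAt (fun t : ℝ => t ^ 2 / 2 + 1) t t := by
      have := ((hasDerivAt_pow 2 t).div_const 2).add_const 1
      simpa using this.congr_deriv (by ring)
    have hlast : HasDerivAt
        (fun t : ℝ => s11phi ω * (ω ^ 2 * (1 - (t ^ 2 / 2 + 1) * Real.exp (-t ^ 2 / 2)) - 2))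
        (s11phi ω * (ω ^ 2 * (t ^ 3 / 2) * Real.exp (-t ^ 2 / 2))) t := by
      have hmul := hq.mul hexp
      have h1 := ((hmul.const_sub 1).const_mul (ω^2)).sub_const 2
      have h2 := h1.const_mul (s11phi ω)
      refine h2.congr_deriv ?_
      ring
    have := (((hG1.const_mul ω).sub hp1).add ((hG2.const_mul ω).sub hp2)).sub hlast
    refine this.congr_deriv ?_
    ring
  have hD : ∀ t : ℝ, 0 ≤ t →
      0 ≤ t * (s11phi (ω - t) + s11phi (ω + t))
        - s11phi ω * (ω ^ 2 * (t ^ 3 / 2) * Real.exp (-t ^ 2 / 2)) := by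
    intro t ht
    have h1 : s11phi ω * (ω ^ 2 * (t ^ 2 / 2) * Real.exp (-t ^ 2 / 2))
        ≤ s11phi (ω - t) + s11phi (ω + t) := by
      rw [s11phi_shift ω t, show ω + t = ω - (-t) by ring, s11phi_shift ω (-t)]
      have hphi : 0 < s11phi ω := by unfold s11phi; positivity
      have hexp : 0 < Real.exp (-t^2/2) := Real.exp_pos _
      rw [show (-t:ℝ)^2 = t^2 by ring]
      have hkey : ω ^ 2 * (t ^ 2 / 2) ≤ Real.exp (ω*t) + Real.exp (ω*(-t)) := by
        have h2 : (ω*t)^2 ≤ Real.exp (ω*t) := s11exp_ge_sq (mul_nonneg hω ht)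
        have h3 : 0 < Real.exp (ω*(-t)) := Real.exp_pos _
        nlinarith
      have hm := mul_le_mul_of_nonneg_left hkey (mul_pos hphi hexp).le
      nlinarith [hm]
    calc (0:ℝ) = t * (s11phi ω * (ω ^ 2 * (t ^ 2 / 2) * Real.exp (-t ^ 2 / 2)))
          - s11phi ω * (ω ^ 2 * (t ^ 3 / 2) * Real.exp (-t ^ 2 / 2)) := by ring
      _ ≤ t * (s11phi (ω - t) + s11phi (ω + t))
          - s11phi ω * (ω ^ 2 * (t ^ 3 / 2) * Real.exp (-t ^ 2 / 2)) := by
          have := mul_le_mul_of_nonneg_left h1 ht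
          linarith
  have hF0 : 0 ≤ F 0 := by
    have : F 0 = 2 * ω * s11G ω := by
      simp only [hF, sub_zero, add_zero]
      norm_num
      ring
    rw [this]
    have := s11G_nonneg ω
    positivity
  have hmono : F 0 ≤ F θ := by
    have hcont : ContinuousOn F (Ici 0) :=
      Continuous.continuousOn (continuous_iff_continuousAt.mpr fun t => (hFderiv t).continuousAt)
    have hmono := monotoneOn_of_deriv_nonneg (convex_Ici 0) hcont
      (fun t _ => (hFderiv t).differentiableAt.differentiableWithinAt)
      (fun t ht => by
        rw [(hFderiv t).deriv]
        exact hD t (le_of_lt (by simpa [interior_Ici] using ht)))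
    exact hmono (self_mem_Ici) hθ hθ
  have := le_trans hF0 hmono
  simp only [hF] at this
  linarith

lemma s11compute (ω θ : ℝ) (hω : 0 ≤ ω) :
    ∫ x in {x : ℝ | ω < |θ + x|}, (ω - x * Real.sign (θ + x)) ∂(gaussianReal 0 1)
      = ω * s11G (ω - θ) - s11phi (ω - θ) + (ω * s11G (ω + θ) - s11phi (ω + θ)) := by
  have hset : {x : ℝ | ω < |θ + x|} = Iio (-ω - θ) ∪ Ioi (ω - θ) := by
    ext x
    simp only [mem_setOf_eq, mem_union, mem_Iio, mem_Ioi, lt_abs]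
    constructor
    · rintro (h | h)
      · right; linarith
      · left; linarith
    · rintro (h | h)
      · right; linarith
      · left; linarith
  have hmeasset : MeasurableSet {x : ℝ | ω < |θ + x|} := by
    rw [hset]; exact measurableSet_Iio.union measurableSet_Ioi
  have hgauss : (gaussianReal 0 1)
      = volume.withDensity (fun x => ((s11phi x).toNNReal : ℝ≥0∞)) := by
    rw [gaussianReal_of_var_ne_zero 0 one_ne_zero]
    congr 1
    funext x
    rw [gaussianPDF, s11phi_eq]
    rfl
  rw [hgauss, setIntegral_withDensity_eq_setIntegral_smul
    (s11continuous_phi.measurable.real_toNNReal) _ hmeasset]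
  have hsmul : ∀ x : ℝ, ((s11phi x).toNNReal : ℝ≥0) • (ω - x * Real.sign (θ + x))
      = s11phi x * (ω - x * Real.sign (θ + x)) := fun x => by
    rw [NNReal.smul_def, Real.coe_toNNReal _ (s11phi_nonneg x), smul_eq_mul]
  simp_rw [hsmul]
  rw [hset]
  have hdisj : Disjoint (Iio (-ω - θ)) (Ioi (ω - θ)) := by
    apply Set.disjoint_left.mpr
    intro x hx hx'
    simp only [mem_Iio, mem_Ioi] at hx hx'
    linarith
  have hIio_eq : EqOn (fun x => ω * s11phi x + x * s11phi x)
      (fun x => s11phi x * (ω - x * Real.sign (θ + x))) (Iio (-ω - θ)) := by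
    intro x hx
    simp only [mem_Iio] at hx
    have : θ + x < 0 := by linarith
    simp only [Real.sign_of_neg this]
    ring
  have hIoi_eq : EqOn (fun x => ω * s11phi x - x * s11phi x)
      (fun x => s11phi x * (ω - x * Real.sign (θ + x))) (Ioi (ω - θ)) := by
    intro x hx
    simp only [mem_Ioi] at hx
    have : 0 < θ + x := by linarith
    simp only [Real.sign_of_pos this]
    ring
  have hint1 : Integrable (fun x => ω * s11phi x + x * s11phi x) :=
    (s11integrable_phi.const_mul ω).add s11integrable_xphi
  have hint2 : Integrable (fun x => ω * s11phi x - x * s11phi x) :=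
    (s11integrable_phi.const_mul ω).sub s11integrable_xphi
  have hIio : IntegrableOn (fun x => s11phi x * (ω - x * Real.sign (θ + x))) (Iio (-ω - θ)) :=
    (hint1.integrableOn).congr_fun hIio_eq measurableSet_Iio
  have hIoi : IntegrableOn (fun x => s11phi x * (ω - x * Real.sign (θ + x))) (Ioi (ω - θ)) :=
    (hint2.integrableOn).congr_fun hIoi_eq measurableSet_Ioi
  rw [setIntegral_union hdisj measurableSet_Ioi hIio hIoi]
  have h1 : ∫ x in Iio (-ω - θ), s11phi x * (ω - x * Real.sign (θ + x))
      = ω * s11G (ω + θ) - s11phi (ω + θ) := by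
    rw [← setIntegral_congr_fun measurableSet_Iio hIio_eq]
    rw [← integral_Iic_eq_integral_Iio]
    rw [integral_add ((s11integrable_phi.const_mul ω).integrableOn)
      (s11integrable_xphi.integrableOn)]
    rw [integral_const_mul, s11HIic, s11momIic]
    rw [show -(-ω - θ) = ω + θ by ring, show (-ω - θ : ℝ) = -(ω + θ) by ring, s11phi_even]
    ring
  have h2 : ∫ x in Ioi (ω - θ), s11phi x * (ω - x * Real.sign (θ + x))
      = ω * s11G (ω - θ) - s11phi (ω - θ) := by
    rw [← setIntegral_congr_fun measurableSet_Ioi hIoi_eq]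
    rw [integral_sub ((s11integrable_phi.const_mul ω).integrableOn)
      (s11integrable_xphi.integrableOn)]
    rw [integral_const_mul, s11momIoi, s11G]
  rw [h1, h2]
  ring

/-- Lower bound on `𝔼[(ω - G sign(θ+G)) 𝟙(|θ+G| > ω)]` for `G ∼ N(0,1)`. -/
theorem stmt11 (ω θ : ℝ) (hω : 0 ≤ ω) :
    (1 / Real.sqrt (2 * Real.pi)) * Real.exp (-ω ^ 2 / 2) *
        (ω ^ 2 * (1 - (θ ^ 2 / 2 + 1) * Real.exp (-θ ^ 2 / 2)) - 2)
      ≤ ∫ x in {x : ℝ | ω < |θ + x|}, (ω - x * Real.sign (θ + x)) ∂(gaussianReal 0 1) := by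
  have hphi : (1 / Real.sqrt (2 * Real.pi)) * Real.exp (-ω ^ 2 / 2) = s11phi ω := by
    unfold s11phi; rw [one_div]
  rw [s11compute ω θ hω, hphi]
  rcases le_or_gt 0 θ with hθ | hθ
  · exact s11key ω θ hω hθ
  · have h := s11key ω (-θ) hω (by linarith)
    rw [show ω - -θ = ω + θ by ring, show ω + -θ = ω - θ by ring,
      show ((-θ : ℝ)) ^ 2 = θ ^ 2 by ring] at h
    linarith
end

section
/- Let $G\sim\mathcal{N}(0,1)$ and $\tau\ge 3$. If $\varepsilon\ge\tau$, then $\big|\mathbb{E}[G(\varepsilon+G)\,\mathbf{1}(|\varepsilon+G|<\tau)]\big| \le \tau$ and $\mathbb{E}[\min\{(\varepsilon+G)^2,\tau^2\}] > \tau^2/2$; consequently $\big|\mathbb{E}[G(\varepsilon+G)\mathbf{1}(|\varepsilon+G|<\tau)]\big| \le \tfrac{2}{\tau}\,\mathbb{E}[\min\{(\varepsilon+G)^2,\tau^2\}] \le \tfrac{2}{3}\,\mathbb{E}[\min\{(\varepsilon+G)^2,\tau^2\}]$. -/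
open MeasureTheory ProbabilityTheory Real Set

noncomputable def phi : ℝ → ℝ := gaussianPDFReal 0 1

lemma phi_def (x : ℝ) : phi x = (Real.sqrt (2 * π))⁻¹ * Real.exp (-(x ^ 2) / 2) := by
  simp [phi, gaussianPDFReal]

lemma phi_nonneg (x : ℝ) : 0 ≤ phi x := gaussianPDFReal_nonneg 0 1 x

lemma phi_pos (x : ℝ) : 0 < phi x := gaussianPDFReal_pos 0 1 x one_ne_zero

lemma phi_neg (x : ℝ) : phi (-x) = phi x := by
  rw [phi_def, phi_def]; ring_nf

lemma phi_meas : Measurable phi := measurable_gaussianPDFReal 0 1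

lemma phi_int : Integrable phi := integrable_gaussianPDFReal 0 1

lemma gauss_integral (g : ℝ → ℝ) :
    ∫ x, g x ∂(gaussianReal 0 1) = ∫ x, phi x * g x := by
  rw [gaussianReal_of_var_ne_zero 0 one_ne_zero, gaussianPDF_def]
  have h : (fun x => ENNReal.ofReal (gaussianPDFReal 0 1 x))
      = fun x => ((fun y => (gaussianPDFReal 0 1 y).toNNReal) x : ENNReal) := rfl
  rw [h, integral_withDensity_eq_integral_smul
    ((measurable_gaussianPDFReal 0 1).real_toNNReal) g]
  congr 1
  ext x
  simp only [NNReal.smul_def, smul_eq_mul, phi]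
  rw [Real.coe_toNNReal _ (gaussianPDFReal_nonneg 0 1 x)]

lemma gauss_set_integral (g : ℝ → ℝ) {s : Set ℝ} (hs : MeasurableSet s) :
    ∫ x in s, g x ∂(gaussianReal 0 1) = ∫ x in s, phi x * g x := by
  rw [gaussianReal_of_var_ne_zero 0 one_ne_zero, gaussianPDF_def]
  have h : (fun x => ENNReal.ofReal (gaussianPDFReal 0 1 x))
      = fun x => ((fun y => (gaussianPDFReal 0 1 y).toNNReal) x : ENNReal) := rfl
  rw [h, restrict_withDensity hs, integral_withDensity_eq_integral_smul
    ((measurable_gaussianPDFReal 0 1).real_toNNReal) g]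
  congr 1
  ext x
  simp only [NNReal.smul_def, smul_eq_mul, phi]
  rw [Real.coe_toNNReal _ (gaussianPDFReal_nonneg 0 1 x)]

lemma ioi_integral : ∫ x in Ioi (0:ℝ), x * Real.exp (-(1/2) * x ^ 2) = 1 := by
  have hderiv : ∀ x ∈ Ici (0:ℝ),
      HasDerivAt (fun y : ℝ => -Real.exp (-(1/2) * y ^ 2))
        (x * Real.exp (-(1/2) * x ^ 2)) x := by
    intro x _
    have h1 : HasDerivAt (fun y : ℝ => -(1/2) * y ^ 2) (-(1/2) * (2 * x)) x :=
      (hasDerivAt_pow 2 x).const_mul (-(1/2)) |>.congr_deriv (by ring)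
    have h2 := (h1.exp).fun_neg
    refine h2.congr_deriv ?_
    ring
  have hint : IntegrableOn (fun x : ℝ => x * Real.exp (-(1/2) * x ^ 2)) (Ioi 0) :=
    (integrable_mul_exp_neg_mul_sq (by norm_num)).integrableOn
  have htend : Filter.Tendsto (fun y : ℝ => -Real.exp (-(1/2) * y ^ 2))
      Filter.atTop (nhds 0) := by
    rw [show (0:ℝ) = -0 by norm_num]
    apply Filter.Tendsto.neg
    apply Real.tendsto_exp_atBot.comp
    apply Filter.Tendsto.const_mul_atTop_of_neg (by norm_num : (-(1/2) : ℝ) < 0)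
    exact Filter.tendsto_pow_atTop (by norm_num)
  have := MeasureTheory.integral_Ioi_of_hasDerivAt_of_tendsto' hderiv hint htend
  simp at this
  convert this using 1 <;> simp

lemma phi_absint : Integrable (fun x => phi x * |x|) := by
  have h : Integrable (fun x : ℝ => x * Real.exp (-(1/2) * x ^ 2)) :=
    integrable_mul_exp_neg_mul_sq (by norm_num)
  have h2 := (h.abs.const_mul ((Real.sqrt (2 * π))⁻¹))
  apply h2.congr
  filter_upwards with x
  rw [phi_def, abs_mul, abs_of_nonneg (Real.exp_pos _).le, mul_comm (|x|) _]
  ring_nf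

lemma phi_abs_Iic : ∫ x in Iic (0:ℝ), phi x * |x| ≤ 1/2 := by
  have h2 := integral_comp_neg_Iic (0:ℝ) (fun y => phi y * y)
  simp only [neg_zero] at h2
  have e1 : ∫ x in Iic (0:ℝ), phi x * |x| = ∫ x in Iic (0:ℝ), phi (-x) * (-x) := by
    apply setIntegral_congr_fun measurableSet_Iic
    intro x hx
    show phi x * |x| = phi (-x) * -x
    rw [phi_neg, abs_of_nonpos (by exact hx)]
  rw [e1, h2]
  have e2 : ∫ x in Ioi (0:ℝ), phi x * x
      = (Real.sqrt (2 * π))⁻¹ * ∫ x in Ioi (0:ℝ), x * Real.exp (-(1/2) * x ^ 2) := by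
    rw [← integral_const_mul]
    apply setIntegral_congr_fun measurableSet_Ioi
    intro x _
    show phi x * x = (Real.sqrt (2 * π))⁻¹ * (x * Real.exp (-(1/2) * x ^ 2))
    rw [phi_def]
    ring_nf
  rw [e2, ioi_integral, mul_one]
  rw [inv_le_comm₀ (by positivity) (by norm_num)]
  rw [show ((1:ℝ)/2)⁻¹ = 2 by norm_num]
  rw [Real.le_sqrt (by norm_num) (by positivity)]
  nlinarith [Real.pi_gt_three]

lemma phi_Ici_half : ∫ x in Ici (0:ℝ), phi x = 1/2 := by
  have htot : ∫ x, phi x = 1 := integral_gaussianPDFReal_eq_one 0 one_ne_zero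
  have hsplit : (∫ x in Iio (0:ℝ), phi x) + ∫ x in Ici (0:ℝ), phi x = ∫ x, phi x :=
    intervalIntegral.integral_Iio_add_Ici phi_int.integrableOn phi_int.integrableOn
  have h2 := integral_comp_neg_Iic (0:ℝ) phi
  simp only [neg_zero, phi_neg] at h2
  have hsym : ∫ x in Iio (0:ℝ), phi x = ∫ x in Ici (0:ℝ), phi x := by
    rw [← integral_Iic_eq_integral_Iio, h2, integral_Ici_eq_integral_Ioi]
  rw [htot, hsym] at hsplit
  linarith

/-- Key contraction estimate for the robust-regression state evolution: for `G ∼ N(0,1)`,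
`τ ≥ 3` and a shift `ε ≥ τ`, the truncated correlation is dominated by a strict fraction
of the truncated second moment. -/
theorem stmt12 (τ ε : ℝ) (hτ : 3 ≤ τ) (hε : τ ≤ ε) :
    |∫ x in {x : ℝ | |ε + x| < τ}, x * (ε + x) ∂(gaussianReal 0 1)| ≤ τ ∧
    τ ^ 2 / 2 < ∫ x, min ((ε + x) ^ 2) (τ ^ 2) ∂(gaussianReal 0 1) ∧
    |∫ x in {x : ℝ | |ε + x| < τ}, x * (ε + x) ∂(gaussianReal 0 1)|
      ≤ (2 / τ) * ∫ x, min ((ε + x) ^ 2) (τ ^ 2) ∂(gaussianReal 0 1) ∧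
    |∫ x in {x : ℝ | |ε + x| < τ}, x * (ε + x) ∂(gaussianReal 0 1)|
      ≤ (2 / 3) * ∫ x, min ((ε + x) ^ 2) (τ ^ 2) ∂(gaussianReal 0 1) := by
  have hτ0 : (0:ℝ) < τ := by linarith
  set S : Set ℝ := {x : ℝ | |ε + x| < τ} with hSdef
  have hS : MeasurableSet S := by
    have : S = (fun x : ℝ => |ε + x|) ⁻¹' (Iio τ) := rfl
    rw [this]
    exact ((measurable_const.add measurable_id).abs) measurableSet_Iio
  have hSsub : S ⊆ Iic 0 := by
    intro x hx
    have h1 : |ε + x| < τ := hx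
    have := (abs_lt.mp h1).2
    simp only [mem_Iic]
    linarith
  -- the truncated second moment
  set m : ℝ → ℝ := fun x => min ((ε + x) ^ 2) (τ ^ 2) with hmdef
  have hmcont : Continuous m := by
    apply Continuous.min <;> fun_prop
  have hmnonneg : ∀ x, 0 ≤ m x := fun x => le_min (sq_nonneg _) (sq_nonneg _)
  have hmle : ∀ x, m x ≤ τ ^ 2 := fun x => min_le_right _ _
  have hint : Integrable (fun x => phi x * m x) := by
    apply ((phi_int.const_mul (τ ^ 2)).mono
      ((phi_meas.mul hmcont.measurable).aestronglyMeasurable))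
    filter_upwards with x
    rw [Real.norm_eq_abs, Real.norm_eq_abs, Pi.mul_apply,
      abs_of_nonneg (mul_nonneg (phi_nonneg x) (hmnonneg x)),
      abs_of_nonneg (mul_nonneg (sq_nonneg τ) (phi_nonneg x))]
    calc phi x * m x ≤ phi x * τ ^ 2 :=
          mul_le_mul_of_nonneg_left (hmle x) (phi_nonneg x)
      _ = τ ^ 2 * phi x := by ring
  have hsplit := intervalIntegral.integral_Iio_add_Ici (b := 0) (μ := volume)
    hint.integrableOn hint.integrableOn
  have hIci : ∫ x in Ici (0:ℝ), phi x * m x = τ ^ 2 * (1/2) := by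
    have e : ∫ x in Ici (0:ℝ), phi x * m x = ∫ x in Ici (0:ℝ), τ ^ 2 * phi x := by
      apply setIntegral_congr_fun measurableSet_Ici
      intro x hx
      have hx0 : (0:ℝ) ≤ x := hx
      have hmin : m x = τ ^ 2 := by
        apply min_eq_right
        have h1 : τ ≤ ε + x := by linarith
        have h2 : (0:ℝ) ≤ τ := hτ0.le
        nlinarith
      show phi x * m x = τ ^ 2 * phi x
      rw [hmin]; ring
    rw [e, integral_const_mul, phi_Ici_half]
  have hIio : 0 < ∫ x in Iio (0:ℝ), phi x * m x := by
    rw [setIntegral_pos_iff_support_of_nonneg_ae]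
    · apply lt_of_lt_of_le _ (measure_mono (?_ : Ioo (-1:ℝ) 0 ⊆ _))
      · rw [Real.volume_Ioo]
        norm_num
      · intro x hx
        constructor
        · have hx1 : -1 < x := hx.1
          have hx2 : x < 0 := hx.2
          have hε1 : (0:ℝ) < ε + x := by linarith
          have : 0 < m x := lt_min (by positivity) (by positivity)
          exact ne_of_gt (mul_pos (phi_pos x) this)
        · exact hx.2
    · filter_upwards with x
      exact mul_nonneg (phi_nonneg x) (hmnonneg x)
    · exact hint.integrableOn
  have hK : ∫ x, m x ∂(gaussianReal 0 1) = ∫ x, phi x * m x := gauss_integral m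
  have part2 : τ ^ 2 / 2 < ∫ x, m x ∂(gaussianReal 0 1) := by
    rw [hK, ← hsplit, hIci]
    linarith
  -- part 1
  have hJ : ∫ x in S, x * (ε + x) ∂(gaussianReal 0 1)
      = ∫ x in S, phi x * (x * (ε + x)) := gauss_set_integral _ hS
  have habs : Integrable (fun x => τ * (phi x * |x|)) := phi_absint.const_mul τ
  have part1 : |∫ x in S, x * (ε + x) ∂(gaussianReal 0 1)| ≤ τ := by
    rw [hJ]
    calc |∫ x in S, phi x * (x * (ε + x))|
        ≤ ∫ x in S, |phi x * (x * (ε + x))| := by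
          simpa only [Real.norm_eq_abs] using
            norm_integral_le_integral_norm (μ := volume.restrict S)
              (f := fun x => phi x * (x * (ε + x)))
      _ ≤ ∫ x in S, τ * (phi x * |x|) := by
          apply setIntegral_mono_on _ habs.integrableOn hS
          · intro x hx
            have h1 : |ε + x| < τ := hx
            rw [abs_mul, abs_mul, abs_of_nonneg (phi_nonneg x)]
            calc phi x * (|x| * |ε + x|) ≤ phi x * (|x| * τ) := by
                  apply mul_le_mul_of_nonneg_left _ (phi_nonneg x)
                  exact mul_le_mul_of_nonneg_left h1.le (abs_nonneg x)
              _ = τ * (phi x * |x|) := by ring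
          · apply (habs.restrict (s := S)).mono
              ((phi_meas.mul ((measurable_id.mul
                (measurable_const.add measurable_id)))).abs.aestronglyMeasurable)
            filter_upwards [ae_restrict_mem hS] with x hx
            have h1 : |ε + x| < τ := hx
            rw [Real.norm_eq_abs, Real.norm_eq_abs, abs_abs,
              abs_of_nonneg (mul_nonneg (mul_nonneg hτ0.le (phi_nonneg x)) (abs_nonneg x) |>.trans_eq (by ring) : 0 ≤ τ * (phi x * |x|))]
            simp only [Pi.mul_apply, Pi.add_apply, id_eq]
            rw [abs_mul, abs_mul, abs_of_nonneg (phi_nonneg x)]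
            calc phi x * (|x| * |ε + x|) ≤ phi x * (|x| * τ) := by
                  apply mul_le_mul_of_nonneg_left _ (phi_nonneg x)
                  exact mul_le_mul_of_nonneg_left h1.le (abs_nonneg x)
              _ = τ * (phi x * |x|) := by ring
      _ ≤ ∫ x in Iic (0:ℝ), τ * (phi x * |x|) := by
          apply setIntegral_mono_set habs.integrableOn
          · filter_upwards with x
            exact mul_nonneg hτ0.le (mul_nonneg (phi_nonneg x) (abs_nonneg x))
          · exact HasSubset.Subset.eventuallyLE hSsub
      _ = τ * ∫ x in Iic (0:ℝ), phi x * |x| := integral_const_mul τ _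
      _ ≤ τ * (1/2) := mul_le_mul_of_nonneg_left phi_abs_Iic hτ0.le
      _ ≤ τ := by linarith
  refine ⟨part1, part2, ?_, ?_⟩
  · have h1 : τ ≤ (2 / τ) * ∫ x, m x ∂(gaussianReal 0 1) := by
      have h2 : (2 / τ) * (τ ^ 2 / 2) = τ := by field_simp
      nlinarith [part2, div_pos (by norm_num : (0:ℝ) < 2) hτ0]
    exact part1.trans h1
  · have hKnn : 0 ≤ ∫ x, m x ∂(gaussianReal 0 1) :=
      ((by positivity : (0:ℝ) ≤ τ ^ 2 / 2).trans_lt part2).le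
    have h3 : (2 / τ) * ∫ x, m x ∂(gaussianReal 0 1) ≤ (2/3) * ∫ x, m x ∂(gaussianReal 0 1) := by
      apply mul_le_mul_of_nonneg_right _ hKnn
      rw [div_le_div_iff₀ hτ0 (by norm_num)]
      linarith
    have h1 : τ ≤ (2 / τ) * ∫ x, m x ∂(gaussianReal 0 1) := by
      have h2 : (2 / τ) * (τ ^ 2 / 2) = τ := by field_simp
      nlinarith [part2, div_pos (by norm_num : (0:ℝ) < 2) hτ0]
    exact part1.trans (h1.trans h3)
end
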